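/- Let G be a connected graph with at least 3 vertices, let z be a vertex of degree 1, and let u be the unique neighbor of z. Then u is an isolated vertex in the strong resolving graph G_SR: u is not mutually maximally distant from any vertex of G. -/

import Mathlib

private lemma unique_nbr {V : Type*} [Fintype V] (G : SimpleGraph V) [DecidableRel G.Adj]
    {z u : V} (hz : G.degree z = 1) (hadj : G.Adj z u) :
    ∀ y, G.Adj z y → y = u := by
  intro y hy
  have h1 : (G.neighborFinset z).card = 1 := by rwa [G.card_neighborFinset_eq_degree]
  obtain ⟨a, ha⟩ := Finset.card_eq_one.mp h1
  have hu : u ∈ G.neighborFinset z := by simpa using hadj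
  have hyy : y ∈ G.neighborFinset z := by simpa using hy
  rw [ha, Finset.mem_singleton] at hu hyy
  rw [hyy, hu]

private lemma dist_lt {V : Type*} [Fintype V] (G : SimpleGraph V) [DecidableRel G.Adj]
    (hG : G.Connected) {z u : V} (hz : G.degree z = 1) (hadj : G.Adj z u) :
    ∀ w, w ≠ z → G.dist u w < G.dist z w := by
  intro w hw
  have hpos : 0 < G.dist z w := hG.pos_dist_of_ne (Ne.symm hw)
  obtain ⟨p, hp⟩ := (hG z w).exists_walk_length_eq_dist
  cases p with
  | nil => exact (hw rfl).elim
  | cons h q =>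
    rename_i x
    have heq := unique_nbr G hz hadj x h
    subst x
    have : G.dist u w ≤ q.length := SimpleGraph.dist_le q
    simp [SimpleGraph.Walk.length_cons] at hp
    omega

theorem stmt_9 {V : Type*} [Fintype V] (G : SimpleGraph V) [DecidableRel G.Adj]
    (hG : G.Connected) (hcard : 3 ≤ Fintype.card V)
    (z u : V) (hz : G.degree z = 1) (hadj : G.Adj z u) :
    ∀ w : V, ¬ ((∀ y, G.Adj u y → G.dist y w ≤ G.dist u w) ∧
                (∀ y, G.Adj w y → G.dist y u ≤ G.dist w u)) := by
  classical
  rintro w ⟨h1, h2⟩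
  by_cases hwz : w = z
  · subst hwz
    -- now the degree-1 vertex is called w
    obtain ⟨v, hvw, hvu⟩ : ∃ v, v ≠ w ∧ v ≠ u := by
      by_contra hc
      push_neg at hc
      have hsub : (Finset.univ : Finset V) ⊆ {w, u} := by
        intro x _
        rcases Classical.em (x = w) with h | h
        · simp [h]
        · simp [hc x h]
      have hle := Finset.card_le_card hsub
      have hc2 : ({w, u} : Finset V).card ≤ 2 :=
        (Finset.card_insert_le _ _).trans (by simp)
      simp [Finset.card_univ] at hle
      omega
    have huv : u ≠ v := Ne.symm hvu
    obtain ⟨q, hq⟩ := (hG u v).exists_walk_length_eq_dist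
    cases q with
    | nil => exact huv rfl
    | cons h r =>
      rename_i x
      by_cases hxw : x = w
      · subst hxw
        have hle : G.dist x v ≤ r.length := SimpleGraph.dist_le r
        have hlt := dist_lt G hG hz hadj v hvw
        simp [SimpleGraph.Walk.length_cons] at hq
        omega
      · have hd := h1 x h
        have hduw : G.dist u w = 1 := SimpleGraph.dist_eq_one_iff_adj.mpr hadj.symm
        have hxu : x ≠ u := (G.ne_of_adj h).symm
        have hnadj : ¬ G.Adj x w := by
          intro hxwadj
          exact hxu (unique_nbr G hz hadj x hxwadj.symm)
        have h0 : 0 < G.dist x w := hG.pos_dist_of_ne hxw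
        have h1' : G.dist x w ≠ 1 := fun hh => hnadj (SimpleGraph.dist_eq_one_iff_adj.mp hh)
        omega
  · have h := h1 z hadj.symm
    have := dist_lt G hG hz hadj w hwz
    omega
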